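/- For a ∈ ℤ/mℤ and b ∈ ℤ/nℤ, let σ_a be the permutation of ℤ/mℤ given by i ↦ i + a, and τ_b the permutation of ℤ/nℤ given by k ↦ k + b. Then Σ_{a ∈ ℤ/mℤ} Σ_{b ∈ ℤ/nℤ} f(σ_a, τ_b) = m·n·A, where A is the average of f over all m!·n! pairs of permutations. In particular, min_{a,b} f(σ_a,τ_b) ≤ A ≤ max_{a,b} f(σ_a,τ_b). -/

import Mathlib

lemma perm_sum_indep {α : Type*} [Fintype α] [DecidableEq α] (g : α → ℝ) (i i' : α) :
    ∑ σ : Equiv.Perm α, g (σ i) = ∑ σ : Equiv.Perm α, g (σ i') := by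
  refine Fintype.sum_equiv (Equiv.mulRight (Equiv.swap i i')) _ _ fun σ => ?_
  simp [Equiv.Perm.mul_apply]

lemma perm_sum {α : Type*} [Fintype α] [DecidableEq α] (g : α → ℝ) (i : α) :
    ∑ σ : Equiv.Perm α, g (σ i)
      = ((Fintype.card α).factorial : ℝ) / (Fintype.card α) * ∑ j, g j := by
  have : Nonempty α := ⟨i⟩
  have hc : (Fintype.card α : ℝ) ≠ 0 := by
    exact_mod_cast Fintype.card_ne_zero (α := α)
  have key : (Fintype.card α : ℝ) * ∑ σ : Equiv.Perm α, g (σ i)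
      = ((Fintype.card α).factorial : ℝ) * ∑ j, g j := by
    calc (Fintype.card α : ℝ) * ∑ σ : Equiv.Perm α, g (σ i)
        = ∑ _i' : α, ∑ σ : Equiv.Perm α, g (σ i) := by
          rw [Finset.sum_const, Finset.card_univ, nsmul_eq_mul]
      _ = ∑ i' : α, ∑ σ : Equiv.Perm α, g (σ i') :=
          Finset.sum_congr rfl fun i' _ => perm_sum_indep g i i'
      _ = ∑ σ : Equiv.Perm α, ∑ i' : α, g (σ i') := Finset.sum_comm
      _ = ∑ _σ : Equiv.Perm α, ∑ j, g j :=
          Finset.sum_congr rfl fun σ _ => Equiv.sum_comp σ g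
      _ = ((Fintype.card α).factorial : ℝ) * ∑ j, g j := by
          rw [Finset.sum_const, Finset.card_univ, Fintype.card_perm, nsmul_eq_mul]
  field_simp
  linarith [key]

lemma perm_sum2 {α β : Type*} [Fintype α] [DecidableEq α] [Fintype β] [DecidableEq β]
    (g : α → β → ℝ) (i : α) (k : β) :
    ∑ σ : Equiv.Perm α, ∑ π : Equiv.Perm β, g (σ i) (π k)
      = (((Fintype.card α).factorial : ℝ) / (Fintype.card α))
        * (((Fintype.card β).factorial : ℝ) / (Fintype.card β))
        * ∑ j, ∑ l, g j l := by
  calc ∑ σ : Equiv.Perm α, ∑ π : Equiv.Perm β, g (σ i) (π k)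
      = ∑ σ : Equiv.Perm α, (((Fintype.card β).factorial : ℝ) / (Fintype.card β))
          * ∑ l, g (σ i) l :=
        Finset.sum_congr rfl fun σ _ => perm_sum (g (σ i)) k
    _ = (((Fintype.card β).factorial : ℝ) / (Fintype.card β))
          * ∑ σ : Equiv.Perm α, ∑ l, g (σ i) l := by rw [← Finset.mul_sum]
    _ = (((Fintype.card β).factorial : ℝ) / (Fintype.card β))
          * ∑ l, ∑ σ : Equiv.Perm α, g (σ i) l := by rw [Finset.sum_comm]
    _ = (((Fintype.card β).factorial : ℝ) / (Fintype.card β))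
          * ∑ l, (((Fintype.card α).factorial : ℝ) / (Fintype.card α)) * ∑ j, g j l := by
        rw [Finset.sum_congr rfl fun l _ => perm_sum (fun j => g j l) i]
    _ = (((Fintype.card α).factorial : ℝ) / (Fintype.card α))
        * (((Fintype.card β).factorial : ℝ) / (Fintype.card β))
        * ∑ j, ∑ l, g j l := by
        rw [← Finset.mul_sum, Finset.sum_comm]; ring

lemma shift_sum {α : Type*} [Fintype α] [AddGroup α] (g : α → α → ℝ) (i : α) :
    ∑ a : α, g i (i + a) = ∑ j, g i j :=
  Fintype.sum_equiv (Equiv.addLeft i) _ _ fun a => by simp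

lemma shift_sum2 {α β : Type*} [Fintype α] [AddGroup α] [Fintype β] [AddGroup β]
    (g : α → β → ℝ) (i : α) (k : β) :
    ∑ a : α, ∑ b : β, g (i + a) (k + b) = ∑ j, ∑ l, g j l := by
  calc ∑ a : α, ∑ b : β, g (i + a) (k + b)
      = ∑ a : α, ∑ l, g (i + a) l :=
        Finset.sum_congr rfl fun a _ => shift_sum (fun _ l => g (i + a) l) k
    _ = ∑ j, ∑ l, g j l := shift_sum (fun _ j => ∑ l, g j l) i

theorem stmt_4 (m n : ℕ) [NeZero m] [NeZero n]
    (q : ZMod m → ZMod m → ZMod n → ZMod n → ℝ)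
    (c : ZMod m → ZMod m → ℝ) (d : ZMod n → ZMod n → ℝ)
    (f : Equiv.Perm (ZMod m) → Equiv.Perm (ZMod n) → ℝ)
    (hf : ∀ σ π, f σ π =
      (∑ i, ∑ k, q i (σ i) k (π k)) + (∑ i, c i (σ i)) + (∑ k, d k (π k)))
    (A : ℝ)
    (hA : A = (∑ σ : Equiv.Perm (ZMod m), ∑ π : Equiv.Perm (ZMod n), f σ π)
        / ((Nat.factorial m * Nat.factorial n : ℕ) : ℝ)) :
    (∑ a : ZMod m, ∑ b : ZMod n, f (Equiv.addRight a) (Equiv.addRight b))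
        = (m : ℝ) * (n : ℝ) * A
    ∧ (∃ a : ZMod m, ∃ b : ZMod n, f (Equiv.addRight a) (Equiv.addRight b) ≤ A)
    ∧ (∃ a : ZMod m, ∃ b : ZMod n, A ≤ f (Equiv.addRight a) (Equiv.addRight b)) := by
  have hm : (m : ℝ) ≠ 0 := Nat.cast_ne_zero.mpr (NeZero.ne m)
  have hn : (n : ℝ) ≠ 0 := Nat.cast_ne_zero.mpr (NeZero.ne n)
  have hmf : ((m.factorial : ℕ) : ℝ) ≠ 0 := Nat.cast_ne_zero.mpr m.factorial_ne_zero
  have hnf : ((n.factorial : ℕ) : ℝ) ≠ 0 := Nat.cast_ne_zero.mpr n.factorial_ne_zero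
  have cardm : Fintype.card (ZMod m) = m := ZMod.card m
  have cardn : Fintype.card (ZMod n) = n := ZMod.card n
  set Sq : ℝ := ∑ i, ∑ k, ∑ j, ∑ l, q i j k l with hSqdef
  set Sc : ℝ := ∑ i, ∑ j, c i j with hScdef
  set Sd : ℝ := ∑ k, ∑ l, d k l with hSddef
  -- the shift sum
  have hL : (∑ a : ZMod m, ∑ b : ZMod n, f (Equiv.addRight a) (Equiv.addRight b))
      = Sq + (n : ℝ) * Sc + (m : ℝ) * Sd := by
    have : ∀ a : ZMod m, ∀ b : ZMod n, f (Equiv.addRight a) (Equiv.addRight b)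
        = (∑ i, ∑ k, q i (i + a) k (k + b)) + (∑ i, c i (i + a)) + (∑ k, d k (k + b)) := by
      intro a b; rw [hf]; simp
    simp only [this, Finset.sum_add_distrib, Finset.sum_const, Finset.card_univ,
      cardm, cardn, nsmul_eq_mul]
    have h1 : ∑ a : ZMod m, ∑ b : ZMod n, ∑ i, ∑ k, q i (i + a) k (k + b) = Sq := by
      calc ∑ a : ZMod m, ∑ b : ZMod n, ∑ i, ∑ k, q i (i + a) k (k + b)
          = ∑ a : ZMod m, ∑ i, ∑ b : ZMod n, ∑ k, q i (i + a) k (k + b) := by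
            exact Finset.sum_congr rfl fun a _ => Finset.sum_comm
        _ = ∑ i, ∑ a : ZMod m, ∑ b : ZMod n, ∑ k, q i (i + a) k (k + b) := Finset.sum_comm
        _ = ∑ i, ∑ a : ZMod m, ∑ k, ∑ b : ZMod n, q i (i + a) k (k + b) := by
            exact Finset.sum_congr rfl fun i _ => Finset.sum_congr rfl fun a _ =>
              Finset.sum_comm
        _ = ∑ i, ∑ k, ∑ a : ZMod m, ∑ b : ZMod n, q i (i + a) k (k + b) := by
            exact Finset.sum_congr rfl fun i _ => Finset.sum_comm
        _ = Sq := by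
            refine Finset.sum_congr rfl fun i _ => Finset.sum_congr rfl fun k _ => ?_
            exact shift_sum2 (fun j l => q i j k l) i k
    have h2 : ∑ a : ZMod m, ∑ i, c i (i + a) = Sc := by
      calc ∑ a : ZMod m, ∑ i, c i (i + a)
          = ∑ i, ∑ a : ZMod m, c i (i + a) := Finset.sum_comm
        _ = Sc := Finset.sum_congr rfl fun i _ => shift_sum c i
    have h3 : ∑ b : ZMod n, ∑ k, d k (k + b) = Sd := by
      calc ∑ b : ZMod n, ∑ k, d k (k + b)
          = ∑ k, ∑ b : ZMod n, d k (k + b) := Finset.sum_comm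
        _ = Sd := Finset.sum_congr rfl fun k _ => shift_sum d k
    rw [h1, ← Finset.mul_sum, h2, h3]
  -- the full permutation sum
  have hT : (∑ σ : Equiv.Perm (ZMod m), ∑ π : Equiv.Perm (ZMod n), f σ π)
      = ((m.factorial : ℝ) / m) * ((n.factorial : ℝ) / n)
        * (Sq + (n : ℝ) * Sc + (m : ℝ) * Sd) := by
    simp only [hf, Finset.sum_add_distrib, Finset.sum_const, Finset.card_univ,
      Fintype.card_perm, cardm, cardn, nsmul_eq_mul]
    have h1 : ∑ σ : Equiv.Perm (ZMod m), ∑ π : Equiv.Perm (ZMod n),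
        ∑ i, ∑ k, q i (σ i) k (π k)
        = ((m.factorial : ℝ) / m) * ((n.factorial : ℝ) / n) * Sq := by
      calc ∑ σ : Equiv.Perm (ZMod m), ∑ π : Equiv.Perm (ZMod n), ∑ i, ∑ k, q i (σ i) k (π k)
          = ∑ σ : Equiv.Perm (ZMod m), ∑ i, ∑ π : Equiv.Perm (ZMod n),
              ∑ k, q i (σ i) k (π k) := Finset.sum_congr rfl fun σ _ => Finset.sum_comm
        _ = ∑ i, ∑ σ : Equiv.Perm (ZMod m), ∑ π : Equiv.Perm (ZMod n),
              ∑ k, q i (σ i) k (π k) := Finset.sum_comm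
        _ = ∑ i, ∑ σ : Equiv.Perm (ZMod m), ∑ k, ∑ π : Equiv.Perm (ZMod n),
              q i (σ i) k (π k) := Finset.sum_congr rfl fun i _ =>
              Finset.sum_congr rfl fun σ _ => Finset.sum_comm
        _ = ∑ i, ∑ k, ∑ σ : Equiv.Perm (ZMod m), ∑ π : Equiv.Perm (ZMod n),
              q i (σ i) k (π k) := Finset.sum_congr rfl fun i _ => Finset.sum_comm
        _ = ∑ i, ∑ k, ((m.factorial : ℝ) / m) * ((n.factorial : ℝ) / n)
              * (∑ j, ∑ l, q i j k l) := by
            refine Finset.sum_congr rfl fun i _ => Finset.sum_congr rfl fun k _ => ?_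
            have := perm_sum2 (fun j l => q i j k l) i k
            rwa [cardm, cardn] at this
        _ = ((m.factorial : ℝ) / m) * ((n.factorial : ℝ) / n) * Sq := by
            rw [hSqdef, Finset.mul_sum]
            refine Finset.sum_congr rfl fun i _ => ?_
            rw [Finset.mul_sum]
    have h2 : ∑ σ : Equiv.Perm (ZMod m), ∑ i, c i (σ i)
        = ((m.factorial : ℝ) / m) * Sc := by
      calc ∑ σ : Equiv.Perm (ZMod m), ∑ i, c i (σ i)
          = ∑ i, ∑ σ : Equiv.Perm (ZMod m), c i (σ i) := Finset.sum_comm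
        _ = ∑ i, ((m.factorial : ℝ) / m) * ∑ j, c i j := by
            refine Finset.sum_congr rfl fun i _ => ?_
            have := perm_sum (c i) i
            rwa [cardm] at this
        _ = ((m.factorial : ℝ) / m) * Sc := by rw [hScdef, Finset.mul_sum]
    have h3 : ∑ π : Equiv.Perm (ZMod n), ∑ k, d k (π k)
        = ((n.factorial : ℝ) / n) * Sd := by
      calc ∑ π : Equiv.Perm (ZMod n), ∑ k, d k (π k)
          = ∑ k, ∑ π : Equiv.Perm (ZMod n), d k (π k) := Finset.sum_comm
        _ = ∑ k, ((n.factorial : ℝ) / n) * ∑ l, d k l := by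
            refine Finset.sum_congr rfl fun k _ => ?_
            have := perm_sum (d k) k
            rwa [cardn] at this
        _ = ((n.factorial : ℝ) / n) * Sd := by rw [hSddef, Finset.mul_sum]
    rw [h1, ← Finset.mul_sum, h2, h3]
    field_simp
  have hAmn : (m : ℝ) * (n : ℝ) * A = Sq + (n : ℝ) * Sc + (m : ℝ) * Sd := by
    rw [hA, hT]
    push_cast
    field_simp
  have hmain : (∑ a : ZMod m, ∑ b : ZMod n, f (Equiv.addRight a) (Equiv.addRight b))
      = (m : ℝ) * (n : ℝ) * A := by rw [hL, hAmn]
  refine ⟨hmain, ?_, ?_⟩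
  · -- exists ≤ A
    by_contra h
    push_neg at h
    have : (∑ a : ZMod m, ∑ b : ZMod n, A)
        < ∑ a : ZMod m, ∑ b : ZMod n, f (Equiv.addRight a) (Equiv.addRight b) := by
      refine Finset.sum_lt_sum_of_nonempty Finset.univ_nonempty fun a _ => ?_
      refine Finset.sum_lt_sum_of_nonempty Finset.univ_nonempty fun b _ => h a b
    rw [hmain] at this
    simp only [Finset.sum_const, Finset.card_univ, cardm, cardn, nsmul_eq_mul] at this
    nlinarith [this]
  · by_contra h
    push_neg at h
    have : (∑ a : ZMod m, ∑ b : ZMod n, f (Equiv.addRight a) (Equiv.addRight b))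
        < ∑ a : ZMod m, ∑ b : ZMod n, A := by
      refine Finset.sum_lt_sum_of_nonempty Finset.univ_nonempty fun a _ => ?_
      refine Finset.sum_lt_sum_of_nonempty Finset.univ_nonempty fun b _ => h a b
    rw [hmain] at this
    simp only [Finset.sum_const, Finset.card_univ, cardm, cardn, nsmul_eq_mul] at this
    nlinarith [this]
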